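/- arXiv:1705.06270 — 4 statements merged into one kernel-verified Lean document; each statement's English description precedes it below -/
import Mathlib

section
/- The pair (q_l*, q_f*) with q_l* = (2(β + δ_f)(α − γ_l) − β(α − γ_f)) / (4(β + δ_f)(β + δ_l) − 2β²) and q_f* = BR(q_l*) is a bilevel optimum of the Stackelberg duopoly: q_f* is the unique maximizer of q_f ↦ Π_f(q_l*, q_f) over ℝ, and for every q_l ∈ ℝ and every q_f ∈ ℝ that maximizes Π_f(q_l, ·) over ℝ, one has Π_l(q_l*, q_f*) ≥ Π_l(q_l, q_f). -/
/-- Stackelberg duopoly: the pair `(ql*, qf*)` with `qf* = BR(ql*)` is a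
bilevel optimum: `qf*` is the unique maximizer of the follower's profit at
`ql*`, and the leader's profit at `(ql*, qf*)` is at least its profit at any
`(ql, qf)` where `qf` maximizes the follower's profit for `ql`. -/
theorem stackelberg_bilevel_optimum
    (α β γl γf δl δf cl cf : ℝ)
    (hβ : 0 < β) (hδl : 0 < δl) (hδf : 0 < δf) :
    ∀ qls qfs : ℝ,
      qls = (2 * (β + δf) * (α - γl) - β * (α - γf)) /
          (4 * (β + δf) * (β + δl) - 2 * β ^ 2) →
      qfs = (α - γf - β * qls) / (2 * (β + δf)) →
      ((∀ qf : ℝ,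
          (α - β * (qls + qf)) * qf - (δf * qf ^ 2 + γf * qf + cf) ≤
          (α - β * (qls + qfs)) * qfs - (δf * qfs ^ 2 + γf * qfs + cf)) ∧
        (∀ qf : ℝ,
          (α - β * (qls + qf)) * qf - (δf * qf ^ 2 + γf * qf + cf) =
          (α - β * (qls + qfs)) * qfs - (δf * qfs ^ 2 + γf * qfs + cf) →
          qf = qfs) ∧
        (∀ ql qf : ℝ,
          (∀ q : ℝ,
            (α - β * (ql + q)) * q - (δf * q ^ 2 + γf * q + cf) ≤
            (α - β * (ql + qf)) * qf - (δf * qf ^ 2 + γf * qf + cf)) →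
          (α - β * (ql + qf)) * ql - (δl * ql ^ 2 + γl * ql + cl) ≤
          (α - β * (qls + qfs)) * qls - (δl * qls ^ 2 + γl * qls + cl))) := by
  intro qls qfs hql hqf
  have hA : (0:ℝ) < 2 * (β + δf) := by linarith
  have hD : (0:ℝ) < 4 * (β + δf) * (β + δl) - 2 * β ^ 2 := by nlinarith
  have e : qfs * (2 * (β + δf)) = α - γf - β * qls := by
    rw [hqf]; field_simp
  have ed : qls * (4 * (β + δf) * (β + δl) - 2 * β ^ 2) =
      2 * (β + δf) * (α - γl) - β * (α - γf) := by
    rw [hql]; exact div_mul_cancel₀ _ hD.ne'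
  have id1 : ∀ qf : ℝ,
      ((α - β * (qls + qfs)) * qfs - (δf * qfs ^ 2 + γf * qfs + cf)) -
        ((α - β * (qls + qf)) * qf - (δf * qf ^ 2 + γf * qf + cf)) =
      (β + δf) * (qf - qfs) ^ 2 := by
    intro qf; linear_combination (qf - qfs) * e
  refine ⟨?_, ?_, ?_⟩
  · intro qf
    have h0 : (0:ℝ) ≤ (β + δf) * (qf - qfs) ^ 2 := by positivity
    linarith [id1 qf]
  · intro qf hEq
    have h0 : (β + δf) * (qf - qfs) ^ 2 = 0 := by linarith [id1 qf]
    have h1 : (qf - qfs) ^ 2 = 0 := by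
      rcases mul_eq_zero.mp h0 with h | h
      · nlinarith
      · exact h
    have h2 := pow_eq_zero_iff (n := 2) (by norm_num) |>.mp h1
    linarith [sub_eq_zero.mp h2]
  · intro ql qf h
    obtain ⟨brl, e2⟩ : ∃ b : ℝ, b * (2 * (β + δf)) = α - γf - β * ql :=
      ⟨(α - γf - β * ql) / (2 * (β + δf)), by field_simp⟩
    have id2 :
        ((α - β * (ql + brl)) * brl - (δf * brl ^ 2 + γf * brl + cf)) -
          ((α - β * (ql + qf)) * qf - (δf * qf ^ 2 + γf * qf + cf)) =
        (β + δf) * (qf - brl) ^ 2 := by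
      linear_combination (qf - brl) * e2
    have hb := h brl
    have hq : qf = brl := by
      have hp : (0:ℝ) ≤ (β + δf) * (qf - brl) ^ 2 := by positivity
      have h0 : (β + δf) * (qf - brl) ^ 2 = 0 := by linarith
      have h1 : (qf - brl) ^ 2 = 0 := by
        rcases mul_eq_zero.mp h0 with h' | h'
        · nlinarith
        · exact h'
      have h2 := pow_eq_zero_iff (n := 2) (by norm_num) |>.mp h1
      linarith [sub_eq_zero.mp h2]
    rw [hq]
    have id3 : (2 * (β + δf)) *
        (((α - β * (qls + qfs)) * qls - (δl * qls ^ 2 + γl * qls + cl)) -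
          ((α - β * (ql + brl)) * ql - (δl * ql ^ 2 + γl * ql + cl))) =
        (2 * (β + δf) * (β + δl) - β ^ 2) * (ql - qls) ^ 2 := by
      linear_combination (-β * qls) * e + (β * ql) * e2 + (ql - qls) * ed
    have hK : (0:ℝ) < 2 * (β + δf) * (β + δl) - β ^ 2 := by nlinarith
    have h0 : (0:ℝ) ≤ (2 * (β + δf)) *
        (((α - β * (qls + qfs)) * qls - (δl * qls ^ 2 + γl * qls + cl)) -
          ((α - β * (ql + brl)) * ql - (δl * ql ^ 2 + γl * ql + cl))) := by
      rw [id3]; positivity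
    have h1 := (mul_nonneg_iff_of_pos_left hA).mp h0
    linarith
end

section
/- For every weight w with 0 < w ≤ 1, the government's weighted objective H(τ) = w·τ·q̂(τ) − (1−w)·k·q̂(τ) attains its maximum over τ ∈ ℝ at the unique point τ*(w) = (α − γ − k)/2 + k/(2w). -/
/-- Mining tax model: for `0 < w ≤ 1`, the government's weighted objective
`H(τ) = w·τ·q̂(τ) − (1−w)·k·q̂(τ)` attains its maximum over `τ ∈ ℝ` at the
unique point `τ*(w) = (α − γ − k)/2 + k/(2w)`. -/
theorem government_weighted_objective_unique_max
    (α β γ δ φ k : ℝ) (hβ : 0 < β) (hδ : 0 < δ) (hk : 0 < k)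
    (w : ℝ) (hw0 : 0 < w) (hw1 : w ≤ 1) :
    (∀ τ : ℝ,
      w * τ * ((α - γ - τ) / (2 * (β + δ))) -
          (1 - w) * k * ((α - γ - τ) / (2 * (β + δ))) ≤
      w * ((α - γ - k) / 2 + k / (2 * w)) *
            ((α - γ - ((α - γ - k) / 2 + k / (2 * w))) / (2 * (β + δ))) -
          (1 - w) * k *
            ((α - γ - ((α - γ - k) / 2 + k / (2 * w))) / (2 * (β + δ)))) ∧
    (∀ τ : ℝ,
      w * τ * ((α - γ - τ) / (2 * (β + δ))) -
          (1 - w) * k * ((α - γ - τ) / (2 * (β + δ))) =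
      w * ((α - γ - k) / 2 + k / (2 * w)) *
            ((α - γ - ((α - γ - k) / 2 + k / (2 * w))) / (2 * (β + δ))) -
          (1 - w) * k *
            ((α - γ - ((α - γ - k) / 2 + k / (2 * w))) / (2 * (β + δ))) →
      τ = (α - γ - k) / 2 + k / (2 * w)) := by
  have hs : (0:ℝ) < β + δ := by linarith
  have hs' : (β + δ) ≠ 0 := ne_of_gt hs
  have hw' : w ≠ 0 := ne_of_gt hw0
  have key : ∀ τ : ℝ,
      (w * ((α - γ - k) / 2 + k / (2 * w)) *
            ((α - γ - ((α - γ - k) / 2 + k / (2 * w))) / (2 * (β + δ))) -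
          (1 - w) * k *
            ((α - γ - ((α - γ - k) / 2 + k / (2 * w))) / (2 * (β + δ)))) -
      (w * τ * ((α - γ - τ) / (2 * (β + δ))) -
          (1 - w) * k * ((α - γ - τ) / (2 * (β + δ)))) =
      w * (τ - ((α - γ - k) / 2 + k / (2 * w)))^2 / (2 * (β + δ)) := by
    intro τ
    field_simp
    ring
  constructor
  · intro τ
    have h := key τ
    nlinarith [sq_nonneg (τ - ((α - γ - k) / 2 + k / (2 * w))),
      mul_pos hw0 hs, div_nonneg (mul_nonneg hw0.le (sq_nonneg (τ - ((α - γ - k) / 2 + k / (2 * w))))) (by positivity : (0:ℝ) ≤ 2 * (β + δ))]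
  · intro τ hτ
    have h := key τ
    rw [hτ, sub_self] at h
    have h2 : w * (τ - ((α - γ - k) / 2 + k / (2 * w)))^2 = 0 := by
      rcases div_eq_zero_iff.mp h.symm with h4 | h4
      · exact h4
      · exact absurd h4 (by positivity)
    have := mul_eq_zero.mp h2
    rcases this with h3 | h3
    · exact absurd h3 hw'
    · have := pow_eq_zero_iff (n := 2) (by norm_num) |>.mp h3
      linarith [sub_eq_zero.mp this]
end

section
/- For every weight w with 0 < w ≤ 1, the pair (τ*(w), q*(w)) with τ*(w) = (α − γ − k)/2 + k/(2w) and q*(w) = (w(α − γ) − (1−w)k)/(4w(β + δ)) solves the weighted bilevel tax problem: q*(w) is the unique maximizer of q ↦ π(τ*(w), q) over ℝ, and for every τ ∈ ℝ and every q ∈ ℝ that maximizes π(τ, ·) over ℝ, one has w·τ*(w)·q*(w) − (1−w)·k·q*(w) ≥ w·τ·q − (1−w)·k·q. -/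
/-- Mining tax model: for `0 < w ≤ 1`, the pair `(τ*(w), q*(w))` solves the
weighted bilevel tax problem: `q*(w)` is the unique maximizer of
`q ↦ π(τ*(w), q)`, and the weighted objective at `(τ*(w), q*(w))` dominates
that at any `(τ, q)` with `q` a maximizer of `π(τ, ·)`. -/
theorem mining_bilevel_optimum
    (α β γ δ φ k : ℝ) (hβ : 0 < β) (hδ : 0 < δ) (hk : 0 < k)
    (w : ℝ) (hw0 : 0 < w) (hw1 : w ≤ 1) :
    ∀ τs qs : ℝ,
      τs = (α - γ - k) / 2 + k / (2 * w) →
      qs = (w * (α - γ) - (1 - w) * k) / (4 * w * (β + δ)) →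
      ((∀ q : ℝ,
          (α - β * q) * q - (δ * q ^ 2 + γ * q + φ) - τs * q ≤
          (α - β * qs) * qs - (δ * qs ^ 2 + γ * qs + φ) - τs * qs) ∧
        (∀ q : ℝ,
          (α - β * q) * q - (δ * q ^ 2 + γ * q + φ) - τs * q =
          (α - β * qs) * qs - (δ * qs ^ 2 + γ * qs + φ) - τs * qs →
          q = qs) ∧
        (∀ τ q : ℝ,
          (∀ q' : ℝ,
            (α - β * q') * q' - (δ * q' ^ 2 + γ * q' + φ) - τ * q' ≤
            (α - β * q) * q - (δ * q ^ 2 + γ * q + φ) - τ * q) →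
          w * τ * q - (1 - w) * k * q ≤ w * τs * qs - (1 - w) * k * qs)) := by
  intro τs qs hτs hqs
  have hs : 0 < β + δ := by linarith
  have hs' : (β + δ) ≠ 0 := ne_of_gt hs
  have hw' : w ≠ 0 := ne_of_gt hw0
  -- key identity : qs is the best response to τs
  have hkey : α - γ - τs = 2 * (β + δ) * qs := by
    rw [hτs, hqs]; field_simp; ring
  -- generic best-response lemma
  have hbr : ∀ T Q : ℝ, α - γ - T = 2 * (β + δ) * Q → ∀ q : ℝ,
      (α - β * q) * q - (δ * q ^ 2 + γ * q + φ) - T * q ≤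
      (α - β * Q) * Q - (δ * Q ^ 2 + γ * Q + φ) - T * Q := by
    intro T Q hid q
    have hT : T = α - γ - 2 * (β + δ) * Q := by linarith
    subst hT
    nlinarith [mul_nonneg hs.le (sq_nonneg (q - Q))]
  refine ⟨hbr τs qs hkey, ?_, ?_⟩
  · intro q heq
    have h2 : (β + δ) * (q - qs) ^ 2 = 0 := by
      linear_combination -heq + (q - qs) * hkey
    have : (q - qs) ^ 2 = 0 := by
      rcases mul_eq_zero.mp h2 with h | h
      · exact absurd h hs'
      · exact h
    have := pow_eq_zero_iff (n := 2) (by norm_num) |>.mp this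
    linarith
  · intro τ q hmax
    -- q must equal the best response to τ
    set Q : ℝ := (α - γ - τ) / (2 * (β + δ)) with hQ
    have hidQ : α - γ - τ = 2 * (β + δ) * Q := by
      rw [hQ]; field_simp
    have h1 := hmax Q
    have h2 := hbr τ Q hidQ q
    have heq : (α - β * q) * q - (δ * q ^ 2 + γ * q + φ) - τ * q =
        (α - β * Q) * Q - (δ * Q ^ 2 + γ * Q + φ) - τ * Q := le_antisymm h2 h1
    have hqQ : q = Q := by
      have h3 : (β + δ) * (q - Q) ^ 2 = 0 := by
        linear_combination -heq + (q - Q) * hidQ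
      have : (q - Q) ^ 2 = 0 := by
        rcases mul_eq_zero.mp h3 with h | h
        · exact absurd h hs'
        · exact h
      have := pow_eq_zero_iff (n := 2) (by norm_num) |>.mp this
      linarith
    -- first-order condition for τs
    have hfoc : 2 * w * τs = w * (α - γ) + (1 - w) * k := by
      rw [hτs]; field_simp; ring
    subst hqQ
    -- compare objectives using the identities
    have hdiff : 2 * (β + δ) * ((w * τs * qs - (1 - w) * k * qs)
        - (w * τ * Q - (1 - w) * k * Q)) = w * (τ - τs) ^ 2 := by
      linear_combination (-(w * τs - (1 - w) * k)) * hkey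
        + (w * τ - (1 - w) * k) * hidQ + (τ - τs) * hfoc
    nlinarith [hdiff, mul_nonneg hw0.le (sq_nonneg (τ - τs)), hs]
end

section
/- Existence of an optimistic bilevel optimum under continuity and compactness: let U ⊆ ℝⁿ be nonempty and compact, let C ⊆ ℝᵐ be nonempty and compact, and let f, F : ℝⁿ × ℝᵐ → ℝ be continuous. Define Ψ(x) = {y ∈ C : f(x, y) ≤ f(x, z) for all z ∈ C}. Then there exist x* ∈ U and y* ∈ Ψ(x*) such that F(x*, y*) ≤ F(x, y) for all x ∈ U and all y ∈ Ψ(x); that is, F attains its minimum over the inducible region {(x, y) : x ∈ U, y ∈ Ψ(x)}. -/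
/-- Existence of an optimistic bilevel optimum under continuity and
compactness: for nonempty compact `U ⊆ ℝⁿ` and `C ⊆ ℝᵐ` and continuous
`f, F`, there exist `x* ∈ U` and `y* ∈ Ψ(x*)` minimizing `F` over the
inducible region `{(x, y) : x ∈ U, y ∈ Ψ(x)}`, where
`Ψ(x) = {y ∈ C : ∀ z ∈ C, f(x, y) ≤ f(x, z)}`. -/
theorem optimistic_bilevel_optimum_exists
    (n m : ℕ) (U : Set (Fin n → ℝ)) (hUne : U.Nonempty) (hUc : IsCompact U)
    (C : Set (Fin m → ℝ)) (hCne : C.Nonempty) (hCc : IsCompact C)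
    (f F : (Fin n → ℝ) × (Fin m → ℝ) → ℝ)
    (hf : Continuous f) (hF : Continuous F) :
    ∃ xs ∈ U, ∃ ys : Fin m → ℝ,
      (ys ∈ C ∧ ∀ z ∈ C, f (xs, ys) ≤ f (xs, z)) ∧
      ∀ x ∈ U, ∀ y : Fin m → ℝ,
        (y ∈ C ∧ ∀ z ∈ C, f (x, y) ≤ f (x, z)) → F (xs, ys) ≤ F (x, y) := by
  set S : Set ((Fin n → ℝ) × (Fin m → ℝ)) :=
    {p | p.1 ∈ U ∧ p.2 ∈ C ∧ ∀ z ∈ C, f (p.1, p.2) ≤ f (p.1, z)} with hS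
  have hclosed : IsClosed {p : (Fin n → ℝ) × (Fin m → ℝ) | ∀ z ∈ C, f (p.1, p.2) ≤ f (p.1, z)} := by
    have : {p : (Fin n → ℝ) × (Fin m → ℝ) | ∀ z ∈ C, f (p.1, p.2) ≤ f (p.1, z)} =
        ⋂ z ∈ C, {p | f (p.1, p.2) ≤ f (p.1, z)} := by
      ext p; simp
    rw [this]
    refine isClosed_biInter fun z hz => isClosed_le ?_ ?_
    · exact hf.comp (continuous_fst.prodMk continuous_snd)
    · exact hf.comp (continuous_fst.prodMk continuous_const)
  have hScomp : IsCompact S := by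
    have : S = (U ×ˢ C) ∩ {p | ∀ z ∈ C, f (p.1, p.2) ≤ f (p.1, z)} := by
      ext p; simp [hS, Set.mem_prod, and_assoc]
    rw [this]
    exact (hUc.prod hCc).inter_right hclosed
  have hSne : S.Nonempty := by
    obtain ⟨x, hx⟩ := hUne
    obtain ⟨y, hy, hmin⟩ := hCc.exists_isMinOn hCne
      (hf.comp (continuous_const.prodMk continuous_id)).continuousOn
    exact ⟨(x, y), hx, hy, fun z hz => hmin hz⟩
  obtain ⟨⟨xs, ys⟩, hmem, hmin⟩ := hScomp.exists_isMinOn hSne hF.continuousOn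
  exact ⟨xs, hmem.1, ys, ⟨hmem.2.1, hmem.2.2⟩,
    fun x hx y hy => hmin ⟨hx, hy.1, hy.2⟩⟩
end
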